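/- Let G be a graph and let (A, X) be the (P3) input construction for G, with A ∈ ℝ^{3n'×3n'}. If G is 3-colorable, then there exists a symmetric matrix L ∈ ℝ^{3n'×3n'} that fits X such that A + L is positive semidefinite and rank(A + L) ≤ 3. -/

import Mathlib

open Matrix

noncomputable section

/-- Unordered pairs of distinct vertices of `Fin N`, represented by ordered pairs
`(i, j)` with `i < j`. -/
abbrev Pairs (N : ℕ) := {p : Fin N × Fin N // p.1 < p.2}

/-- Vertices of the Peeters supergraph: the original vertices together with, for each
unordered pair `{i,j}` of distinct vertices, four new vertices `a, b, c, d`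
(encoded as `(q, 0), (q, 1), (q, 2), (q, 3)`). -/
abbrev PV (N : ℕ) := Fin N ⊕ (Pairs N × Fin 4)

/-- The generating relation for the edges of the Peeters supergraph: the original edges
together with, for each unordered pair `q = {i,j}`, the nine edges
`{i,a}, {i,b}, {a,b}, {j,c}, {j,d}, {c,d}, {a,j}, {i,d}, {b,c}`. -/
def peetersRel (N : ℕ) (G : SimpleGraph (Fin N)) : PV N → PV N → Prop := fun x y =>
  (∃ i j : Fin N, G.Adj i j ∧ x = Sum.inl i ∧ y = Sum.inl j) ∨
  (∃ q : Pairs N,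
    (x = Sum.inl q.val.1 ∧ y = Sum.inr (q, 0)) ∨
    (x = Sum.inl q.val.1 ∧ y = Sum.inr (q, 1)) ∨
    (x = Sum.inr (q, 0) ∧ y = Sum.inr (q, 1)) ∨
    (x = Sum.inl q.val.2 ∧ y = Sum.inr (q, 2)) ∨
    (x = Sum.inl q.val.2 ∧ y = Sum.inr (q, 3)) ∨
    (x = Sum.inr (q, 2) ∧ y = Sum.inr (q, 3)) ∨
    (x = Sum.inr (q, 0) ∧ y = Sum.inl q.val.2) ∨
    (x = Sum.inl q.val.1 ∧ y = Sum.inr (q, 3)) ∨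
    (x = Sum.inr (q, 1) ∧ y = Sum.inr (q, 2)))

/-- The Peeters supergraph `G'` of `G`. -/
def peetersGraph (N : ℕ) (G : SimpleGraph (Fin N)) : SimpleGraph (PV N) :=
  SimpleGraph.fromRel (peetersRel N G)

/-- Row/column indices of the `(P3)` input construction: pairs `(v, μ)` with
`v ∈ V(G')` and `μ ∈ {1,2,3}`. -/
abbrev Idx (N : ℕ) := PV N × Fin 3

/-- The matrix `A` of the `(P3)` input construction:
`A((v,μ),(w,ν)) = 1` if `v = w` and `μ ≠ ν`, and `0` otherwise. -/
def AP3 (N : ℕ) : Matrix (Idx N) (Idx N) ℝ := fun p q =>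
  if p.1 = q.1 ∧ p.2 ≠ q.2 then 1 else 0

/-- `L` fits the edge set `X` of the `(P3)` input construction, i.e. `L` vanishes on
all pairs `{(v,μ),(w,ν)}` with `{v,w} ∈ E(G')` and on all pairs `{(v,μ),(v,ν)}` with
`μ ≠ ν`. -/
def FitsX (N : ℕ) (G : SimpleGraph (Fin N)) (L : Matrix (Idx N) (Idx N) ℝ) : Prop :=
  (∀ p q : Idx N, (peetersGraph N G).Adj p.1 q.1 → L p q = 0) ∧
  (∀ (v : PV N) (μ ν : Fin 3), μ ≠ ν → L (v, μ) (v, ν) = 0)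

def gad (x y : Fin 3) : Fin 4 → Fin 3 :=
  if x = y then ![x+1, x+2, x+1, x+2] else ![-(x+y), y, x, -(x+y)]

lemma gadProp : ∀ x y : Fin 3,
    x ≠ gad x y 0 ∧ x ≠ gad x y 1 ∧ gad x y 0 ≠ gad x y 1 ∧
    y ≠ gad x y 2 ∧ y ≠ gad x y 3 ∧ gad x y 2 ≠ gad x y 3 ∧
    gad x y 0 ≠ y ∧ x ≠ gad x y 3 ∧ gad x y 1 ≠ gad x y 2 := by decide

/-- extension of a coloring of `G` to the Peeters supergraph -/
def pcol (N : ℕ) (c : Fin N → Fin 3) : PV N → Fin 3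
  | Sum.inl i => c i
  | Sum.inr (q, k) => gad (c q.val.1) (c q.val.2) k

lemma pcol_proper (N : ℕ) (G : SimpleGraph (Fin N)) (c : G.Coloring (Fin 3))
    (u v : PV N) (h : peetersRel N G u v) : pcol N c u ≠ pcol N c v := by
  rcases h with ⟨i, j, hij, rfl, rfl⟩ | ⟨q, h⟩
  · exact c.valid hij
  · obtain ⟨h1, h2, h3, h4, h5, h6, h7, h8, h9⟩ := gadProp (c q.val.1) (c q.val.2)
    rcases h with ⟨rfl, rfl⟩ | ⟨rfl, rfl⟩ | ⟨rfl, rfl⟩ | ⟨rfl, rfl⟩ | ⟨rfl, rfl⟩ |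
      ⟨rfl, rfl⟩ | ⟨rfl, rfl⟩ | ⟨rfl, rfl⟩ | ⟨rfl, rfl⟩ <;>
      simpa [pcol] using by assumption

/-- If `G` is 3-colorable, then the `(P3)` input construction admits a
symmetric `L` fitting `X` with `A + L ⪰ 0` and `rank (A + L) ≤ 3`. -/
theorem stmt7 (N : ℕ) (G : SimpleGraph (Fin N)) (hG : G.Colorable 3) :
    ∃ L : Matrix (Idx N) (Idx N) ℝ, L.IsSymm ∧ FitsX N G L ∧
      (AP3 N + L).PosSemidef ∧ (AP3 N + L).rank ≤ 3 := by
  obtain ⟨c⟩ := hG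
  set f : Idx N → Fin 3 := fun p => pcol N c p.1 with hf
  set X : Matrix (Fin 3) (Idx N) ℝ := fun k p => if f p = k then 1 else 0 with hX
  set M : Matrix (Idx N) (Idx N) ℝ := Xᵀ * X with hM
  have hMent : ∀ p q, M p q = if f p = f q then 1 else 0 := by
    intro p q
    rw [hM, Matrix.mul_apply]
    simp only [Matrix.transpose_apply]
    simp only [hX]
    rw [Finset.sum_eq_single (f p)]
    · by_cases h : f p = f q <;> simp [h, eq_comm]
    · intro k _ hk; simp [Ne.symm hk]
    · simp
  have hadj : ∀ p q : Idx N, (peetersGraph N G).Adj p.1 q.1 → M p q = 0 := by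
    intro p q h
    obtain ⟨hne, hrel⟩ := h
    have : f p ≠ f q := by
      rcases hrel with h | h
      · exact pcol_proper N G c _ _ h
      · exact (pcol_proper N G c _ _ h).symm
    simp [hMent, this]
  have hMconj : Xᴴ = Xᵀ := by
    ext p k; simp [Matrix.conjTranspose_apply]
  refine ⟨M - AP3 N, ?_, ⟨?_, ?_⟩, ?_, ?_⟩
  · unfold Matrix.IsSymm
    ext p q
    simp only [Matrix.transpose_apply, Matrix.sub_apply]
    have e1 : M q p = M p q := by rw [hMent, hMent]; simp [eq_comm]
    have e2 : AP3 N q p = AP3 N p q := by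
      simp only [AP3]
      by_cases h : p.1 = q.1 <;> by_cases h3 : p.2 = q.2 <;> simp [h, h3, eq_comm]
    rw [e1, e2]
  · intro p q h
    have h1 : AP3 N p q = 0 := by
      simp only [AP3]
      have : p.1 ≠ q.1 := h.ne
      simp [this]
    simp [Matrix.sub_apply, hadj p q h, h1]
  · intro v μ ν hμν
    have : f (v, μ) = f (v, ν) := rfl
    simp [Matrix.sub_apply, hMent, this, AP3, hμν]
  · have : AP3 N + (M - AP3 N) = M := by abel
    rw [this, hM, ← hMconj]
    exact Matrix.posSemidef_conjTranspose_mul_self X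
  · have h1 : AP3 N + (M - AP3 N) = M := by abel
    rw [h1, hM]
    calc (Xᵀ * X).rank ≤ Xᵀ.rank := Matrix.rank_mul_le_left _ _
      _ ≤ Fintype.card (Fin 3) := Matrix.rank_le_card_width _
      _ = 3 := by simp




end
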